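/- Let σ be a real number with 0 < σ < 1 and let g : ℝ × (0,∞) → ℂ be measurable. Suppose ∫_ℝ ∫_0^∞ (1+λ)|g(ξ,λ)|² dλ dξ is finite. Then ∫_ℝ ( ∫_0^∞ |g(ξ,λ)| · (1 + √(ξ² + λ))^{σ−1} dλ )² dξ ≤ (1/(1−σ)) · ∫_ℝ ∫_0^∞ (1+λ)|g(ξ,λ)|² dλ dξ. -/

import Mathlib

open MeasureTheory Real
open scoped ENNReal

lemma key_int {σ : ℝ} (hσ1 : σ < 1) :
    (∫⁻ l in Set.Ioi (0 : ℝ), ENNReal.ofReal ((1 + l) ^ (σ - 2))) =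
      ENNReal.ofReal (1 / (1 - σ)) := by
  have hmp : MeasurePreserving (fun x : ℝ => x + 1) volume volume :=
    measurePreserving_add_right volume 1
  have hemb : MeasurableEmbedding (fun x : ℝ => x + 1) :=
    (Homeomorph.addRight (1 : ℝ)).measurableEmbedding
  have hpre : (fun x : ℝ => x + 1) ⁻¹' Set.Ioi (1 : ℝ) = Set.Ioi 0 := by
    ext x; simp [lt_add_iff_pos_left]
  have h1 : (∫⁻ l in Set.Ioi (0 : ℝ), ENNReal.ofReal ((1 + l) ^ (σ - 2)))
      = ∫⁻ u in Set.Ioi (1 : ℝ), ENNReal.ofReal (u ^ (σ - 2)) := by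
    rw [← hpre, ← hmp.setLIntegral_comp_preimage_emb hemb
      (fun u => ENNReal.ofReal (u ^ (σ - 2)))]
    congr 1; ext x; rw [add_comm]
  rw [h1, ← ofReal_integral_eq_lintegral_ofReal]
  · rw [integral_Ioi_rpow_of_lt (by linarith) one_pos]
    congr 1
    rw [Real.one_rpow]
    rw [div_eq_div_iff (by linarith) (by linarith)]
    ring
  · exact integrableOn_Ioi_rpow_of_lt (by linarith) one_pos
  · filter_upwards [ae_restrict_mem measurableSet_Ioi] with x hx
    exact Real.rpow_nonneg (le_of_lt (lt_trans one_pos hx)) _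

lemma real_bound {σ l ξ : ℝ} (hσ1 : σ < 1) (hl : 0 < l) :
    ((1 + Real.sqrt (ξ ^ 2 + l)) ^ (σ - 1) / Real.sqrt (1 + l)) ^ 2
      ≤ (1 + l) ^ (σ - 2) := by
  set s := Real.sqrt (ξ ^ 2 + l) with hs
  set t := Real.sqrt (1 + l) with htdef
  have hl1 : (0 : ℝ) < 1 + l := by linarith
  have ht : 0 < t := Real.sqrt_pos.2 hl1
  have hs0 : 0 ≤ s := Real.sqrt_nonneg _
  have hsq : s ^ 2 = ξ ^ 2 + l := Real.sq_sqrt (by positivity)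
  have hts : t ≤ 1 + s := by
    have h1 : (1 : ℝ) + l ≤ (1 + s) ^ 2 := by nlinarith [sq_nonneg ξ]
    calc t = Real.sqrt (1 + l) := rfl
      _ ≤ Real.sqrt ((1 + s) ^ 2) := Real.sqrt_le_sqrt h1
      _ = 1 + s := Real.sqrt_sq (by positivity)
  have hw : (1 + s) ^ (σ - 1) ≤ t ^ (σ - 1) :=
    Real.rpow_le_rpow_of_nonpos ht hts (by linarith)
  have hw0 : 0 ≤ (1 + s) ^ (σ - 1) := Real.rpow_nonneg (by positivity) _
  have step1 : ((1 + s) ^ (σ - 1) / t) ^ 2 ≤ (t ^ (σ - 1) / t) ^ 2 := by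
    gcongr
  refine step1.trans_eq ?_
  have h2 : t ^ (σ - 1) / t = t ^ (σ - 2) := by
    rw [div_eq_iff ht.ne', ← Real.rpow_add_one ht.ne']
    ring_nf
  rw [h2, htdef, Real.sqrt_eq_rpow, ← Real.rpow_mul hl1.le,
    ← Real.rpow_natCast ((1 + l) ^ ((1:ℝ)/2 * (σ - 2))) 2, ← Real.rpow_mul hl1.le]
  congr 1
  push_cast
  ring

theorem weighted_schur_estimate (σ : ℝ) (hσ0 : 0 < σ) (hσ1 : σ < 1)
    (g : ℝ → ℝ → ℂ) (hg : Measurable (fun q : ℝ × ℝ => g q.1 q.2))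
    (hfin : (∫⁻ ξ : ℝ, ∫⁻ l in Set.Ioi (0 : ℝ),
        ENNReal.ofReal ((1 + l) * ‖g ξ l‖ ^ 2)) < ⊤) :
    (∫⁻ ξ : ℝ, (∫⁻ l in Set.Ioi (0 : ℝ),
        ENNReal.ofReal (‖g ξ l‖ * (1 + Real.sqrt (ξ ^ 2 + l)) ^ (σ - 1))) ^ 2)
      ≤ ENNReal.ofReal (1 / (1 - σ)) *
        ∫⁻ ξ : ℝ, ∫⁻ l in Set.Ioi (0 : ℝ),
          ENNReal.ofReal ((1 + l) * ‖g ξ l‖ ^ 2) := by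
  set B : ℝ≥0∞ := ENNReal.ofReal (1 / (1 - σ)) with hB
  have key : ∀ ξ : ℝ,
      (∫⁻ l in Set.Ioi (0 : ℝ),
        ENNReal.ofReal (‖g ξ l‖ * (1 + Real.sqrt (ξ ^ 2 + l)) ^ (σ - 1))) ^ 2
      ≤ B * ∫⁻ l in Set.Ioi (0 : ℝ),
          ENNReal.ofReal ((1 + l) * ‖g ξ l‖ ^ 2) := by
    intro ξ
    set μ := volume.restrict (Set.Ioi (0 : ℝ)) with hμ
    set f1 : ℝ → ℝ≥0∞ :=
      fun l => ENNReal.ofReal (Real.sqrt (1 + l) * ‖g ξ l‖) with hf1def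
    set f2 : ℝ → ℝ≥0∞ :=
      fun l => ENNReal.ofReal ((1 + Real.sqrt (ξ ^ 2 + l)) ^ (σ - 1) / Real.sqrt (1 + l))
      with hf2def
    have hgm : Measurable fun l : ℝ => ‖g ξ l‖ :=
      continuous_norm.measurable.comp (hg.comp measurable_prodMk_left)
    have hsqrt : Measurable fun l : ℝ => Real.sqrt (1 + l) :=
      (Real.continuous_sqrt.comp (continuous_const.add continuous_id)).measurable
    have hw : Measurable fun l : ℝ => (1 + Real.sqrt (ξ ^ 2 + l)) ^ (σ - 1) := by
      apply Continuous.measurable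
      apply Continuous.rpow_const
      · exact continuous_const.add ((continuous_const.add continuous_id).sqrt)
      · intro x
        left
        positivity
    have hf1 : Measurable f1 := (hsqrt.mul hgm).ennreal_ofReal
    have hf2 : Measurable f2 := (hw.div hsqrt).ennreal_ofReal
    have heq : (∫⁻ l in Set.Ioi (0 : ℝ),
        ENNReal.ofReal (‖g ξ l‖ * (1 + Real.sqrt (ξ ^ 2 + l)) ^ (σ - 1)))
        = ∫⁻ l, f1 l * f2 l ∂μ := by
      refine setLIntegral_congr_fun measurableSet_Ioi (fun l hl => ?_)
      have hl0 : (0 : ℝ) < l := hl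
      have hsp : (0 : ℝ) < Real.sqrt (1 + l) := Real.sqrt_pos.2 (by linarith)
      rw [hf1def, hf2def, ← ENNReal.ofReal_mul (by positivity)]
      congr 1
      field_simp
    have hcs := ENNReal.lintegral_mul_le_Lp_mul_Lq μ
      (p := 2) (q := 2) ⟨by norm_num, by norm_num, by norm_num⟩
      hf1.aemeasurable hf2.aemeasurable
    have hA : (∫⁻ l, f1 l ^ (2 : ℝ) ∂μ)
        = ∫⁻ l in Set.Ioi (0 : ℝ), ENNReal.ofReal ((1 + l) * ‖g ξ l‖ ^ 2) := by
      refine setLIntegral_congr_fun measurableSet_Ioi (fun l hl => ?_)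
      have hl0 : (0 : ℝ) < l := hl
      rw [hf1def, ENNReal.ofReal_rpow_of_nonneg (by positivity) (by norm_num)]
      congr 1
      rw [Real.rpow_two, mul_pow, Real.sq_sqrt (by linarith)]
    have hY : (∫⁻ l, f2 l ^ (2 : ℝ) ∂μ) ≤ B := by
      have hle : (∫⁻ l, f2 l ^ (2 : ℝ) ∂μ)
          ≤ ∫⁻ l in Set.Ioi (0 : ℝ), ENNReal.ofReal ((1 + l) ^ (σ - 2)) := by
        refine setLIntegral_mono_ae (by fun_prop)
          (ae_of_all _ fun l hl => ?_)
        have hl0 : (0 : ℝ) < l := hl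
        rw [hf2def, ENNReal.ofReal_rpow_of_nonneg (by positivity) (by norm_num)]
        apply ENNReal.ofReal_le_ofReal
        rw [Real.rpow_two]
        exact real_bound hσ1 hl0
      exact hle.trans_eq (key_int hσ1)
    set A : ℝ≥0∞ := ∫⁻ l in Set.Ioi (0 : ℝ),
        ENNReal.ofReal ((1 + l) * ‖g ξ l‖ ^ 2) with hAdef
    calc (∫⁻ l in Set.Ioi (0 : ℝ),
        ENNReal.ofReal (‖g ξ l‖ * (1 + Real.sqrt (ξ ^ 2 + l)) ^ (σ - 1))) ^ 2
        = (∫⁻ l, f1 l * f2 l ∂μ) ^ 2 := by rw [heq]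
      _ ≤ ((∫⁻ l, f1 l ^ (2:ℝ) ∂μ) ^ ((1:ℝ)/2) * (∫⁻ l, f2 l ^ (2:ℝ) ∂μ) ^ ((1:ℝ)/2)) ^ 2 := by
          gcongr
          exact hcs
      _ = (∫⁻ l, f1 l ^ (2:ℝ) ∂μ) * (∫⁻ l, f2 l ^ (2:ℝ) ∂μ) := by
          rw [mul_pow, ← ENNReal.rpow_natCast (_ ^ ((1:ℝ)/2)) 2,
            ← ENNReal.rpow_natCast ((∫⁻ l, f2 l ^ (2:ℝ) ∂μ) ^ ((1:ℝ)/2)) 2,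
            ← ENNReal.rpow_mul, ← ENNReal.rpow_mul]
          norm_num
      _ ≤ A * B := by rw [hA]; exact mul_le_mul_right hY _
      _ = B * A := mul_comm _ _
  calc (∫⁻ ξ : ℝ, (∫⁻ l in Set.Ioi (0 : ℝ),
        ENNReal.ofReal (‖g ξ l‖ * (1 + Real.sqrt (ξ ^ 2 + l)) ^ (σ - 1))) ^ 2)
      ≤ ∫⁻ ξ : ℝ, B * ∫⁻ l in Set.Ioi (0 : ℝ),
          ENNReal.ofReal ((1 + l) * ‖g ξ l‖ ^ 2) := lintegral_mono key
    _ = B * ∫⁻ ξ : ℝ, ∫⁻ l in Set.Ioi (0 : ℝ),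
          ENNReal.ofReal ((1 + l) * ‖g ξ l‖ ^ 2) :=
        lintegral_const_mul' _ _ ENNReal.ofReal_ne_top
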